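/- Let N ≥ 2 and let φ ∈ ℂ with φ ≠ 0 and φ⁴ ≠ 1. Suppose K ∈ ℂ[X₁,…,X_N] is a symmetric polynomial satisfying both K(−x, x, x₃, …, x_N) = 0 for all complex values and K(φx, φ⁻¹x, x₃, …, x_N) = 0 for all complex values, and whose partial degree in two variables satisfies deg₂(K) ≤ 4N − 6. Then K = 0. -/

import Mathlib

open MvPolynomial

/-- The `k`-th partial degree of a multivariate polynomial: the total degree of `P`
regarded as a polynomial in the first `k` variables. -/
noncomputable def partialDeg {N : ℕ} (k : ℕ) (P : MvPolynomial (Fin N) ℂ) : ℕ :=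
  P.support.sup fun m => ∑ i ∈ Finset.univ.filter (fun i : Fin N => i.val < k), m i

namespace KernelAux

variable {N : ℕ}

/-- the weight of a monomial: total degree in the first two variables -/
noncomputable def wgt (m : Fin N →₀ ℕ) : ℕ :=
  ∑ i ∈ Finset.univ.filter (fun i : Fin N => i.val < 2), m i

lemma partialDeg_eq (P : MvPolynomial (Fin N) ℂ) : partialDeg 2 P = P.support.sup wgt := rfl

lemma wgt_add (m n : Fin N →₀ ℕ) : wgt (m + n) = wgt m + wgt n := by
  simp [wgt, Finset.sum_add_distrib]

lemma wgt_single (a : Fin N) (n : ℕ) :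
    wgt (Finsupp.single a n) = if a.val < 2 then n else 0 := by
  classical
  simp only [wgt, Finsupp.single_apply]
  rw [Finset.sum_ite_eq (Finset.univ.filter fun i : Fin N => i.val < 2) a (fun _ => n)]
  simp

/-- The homogenization map sending `Xᵢ ↦ C Xᵢ * t` for `i < 2` and `Xᵢ ↦ C Xᵢ` otherwise. -/
noncomputable def Phi : MvPolynomial (Fin N) ℂ →ₐ[ℂ] Polynomial (MvPolynomial (Fin N) ℂ) :=
  aeval (fun i : Fin N =>
    if i.val < 2 then Polynomial.C (X i) * Polynomial.X else Polynomial.C (X i))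

lemma Phi_monomial (m : Fin N →₀ ℕ) (c : ℂ) :
    Phi (monomial m c) = Polynomial.C (monomial m c) * Polynomial.X ^ wgt m := by
  classical
  induction m using Finsupp.induction with
  | zero =>
    rw [monomial_zero']
    simp only [wgt, Finsupp.coe_zero, Pi.zero_apply, Finset.sum_const_zero, pow_zero, mul_one]
    show (aeval _) (C c) = _
    rw [aeval_C]
    rfl
  | single_add a n f han hn ih =>
    rw [monomial_single_add, map_mul, map_pow, wgt_add, wgt_single]
    have hX : Phi (X a : MvPolynomial (Fin N) ℂ) =
        if a.val < 2 then Polynomial.C (X a) * Polynomial.X else Polynomial.C (X a) := by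
      simp [Phi]
    rw [hX, ih]
    rw [map_mul, map_pow]
    by_cases h2 : a.val < 2
    · simp only [if_pos h2]
      rw [mul_pow, pow_add]
      ring
    · simp only [if_neg h2]
      rw [zero_add]
      ring

lemma Phi_eq_sum (P : MvPolynomial (Fin N) ℂ) :
    Phi P = ∑ m ∈ P.support, Polynomial.C (monomial m (coeff m P)) * Polynomial.X ^ wgt m := by
  conv_lhs => rw [P.as_sum]
  rw [map_sum]
  exact Finset.sum_congr rfl fun m _ => Phi_monomial m (coeff m P)

lemma coeff_Phi_ne_zero {P : MvPolynomial (Fin N) ℂ} (hP : P ≠ 0) :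
    (Phi P).coeff (P.support.sup wgt) ≠ 0 := by
  classical
  have hsp : P.support.Nonempty :=
    Finset.nonempty_iff_ne_empty.mpr (fun h => hP (support_eq_empty.mp h))
  obtain ⟨m₀, hm₀, hd⟩ := Finset.exists_mem_eq_sup P.support hsp wgt
  have hcoeff : (Phi P).coeff (P.support.sup wgt) =
      ∑ m ∈ P.support, if wgt m = P.support.sup wgt then monomial m (coeff m P) else 0 := by
    rw [Phi_eq_sum, Polynomial.finset_sum_coeff]
    refine Finset.sum_congr rfl fun m _ => ?_
    rw [Polynomial.coeff_C_mul, Polynomial.coeff_X_pow]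
    by_cases h : wgt m = P.support.sup wgt
    · simp [h]
    · simp [h, Ne.symm h]
  intro h0
  rw [hcoeff] at h0
  have h1 := congrArg (MvPolynomial.coeff m₀) h0
  rw [MvPolynomial.coeff_sum] at h1
  have h2 : ∀ m ∈ P.support, m ≠ m₀ →
      coeff m₀ (if wgt m = P.support.sup wgt then (monomial m) (coeff m P) else 0) = 0 := by
    intro m _ hm
    by_cases h : wgt m = P.support.sup wgt
    · simp [h, coeff_monomial, hm]
    · simp [h]
  rw [Finset.sum_eq_single m₀ h2 (fun h => absurd hm₀ h)] at h1
  rw [if_pos hd.symm, coeff_monomial, if_pos rfl, coeff_zero] at h1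
  exact (mem_support_iff.mp hm₀) h1

lemma Phi_ne_zero {P : MvPolynomial (Fin N) ℂ} (hP : P ≠ 0) : Phi P ≠ 0 := by
  intro h
  exact coeff_Phi_ne_zero hP (by rw [h, Polynomial.coeff_zero])

lemma natDegree_Phi {P : MvPolynomial (Fin N) ℂ} (hP : P ≠ 0) :
    (Phi P).natDegree = partialDeg 2 P := by
  rw [partialDeg_eq]
  refine le_antisymm ?_ (Polynomial.le_natDegree_of_ne_zero (coeff_Phi_ne_zero hP))
  rw [Phi_eq_sum]
  refine Polynomial.natDegree_sum_le_of_forall_le _ _ fun m hm => ?_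
  refine le_trans (Polynomial.natDegree_mul_le) ?_
  simp only [Polynomial.natDegree_C, zero_add]
  exact le_trans (Polynomial.natDegree_pow_le_of_le _ le_rfl)
    (by simpa using Finset.le_sup (f := wgt) hm)

lemma pd_mul {P Q : MvPolynomial (Fin N) ℂ} (hP : P ≠ 0) (hQ : Q ≠ 0) :
    partialDeg 2 (P * Q) = partialDeg 2 P + partialDeg 2 Q := by
  rw [← natDegree_Phi hP, ← natDegree_Phi hQ, ← natDegree_Phi (mul_ne_zero hP hQ), map_mul]
  exact Polynomial.natDegree_mul (Phi_ne_zero hP) (Phi_ne_zero hQ)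

lemma pd_one : partialDeg 2 (1 : MvPolynomial (Fin N) ℂ) = 0 := by
  rw [partialDeg_eq]
  have : (1 : MvPolynomial (Fin N) ℂ).support ⊆ {0} := by
    intro m hm
    rw [mem_support_iff] at hm
    rw [Finset.mem_singleton]
    by_contra h
    exact hm (by rw [show (1 : MvPolynomial (Fin N) ℂ) = C 1 from rfl, coeff_C, if_neg (Ne.symm h)])
  refine Nat.le_antisymm ?_ (Nat.zero_le _)
  refine Finset.sup_le fun m hm => ?_
  have := Finset.mem_singleton.mp (this hm)
  simp [this, wgt]

lemma pd_prod {α : Type*} (s : Finset α) (f : α → MvPolynomial (Fin N) ℂ)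
    (hf : ∀ x ∈ s, f x ≠ 0) :
    partialDeg 2 (∏ x ∈ s, f x) = ∑ x ∈ s, partialDeg 2 (f x) := by
  classical
  induction s using Finset.induction_on with
  | empty => simpa using pd_one
  | insert _ _ ha ih =>
    rename_i a s
    rw [Finset.prod_insert ha, Finset.sum_insert ha,
      pd_mul (hf a (Finset.mem_insert_self a s))
        (Finset.prod_ne_zero_iff.mpr fun x hx => hf x (Finset.mem_insert_of_mem hx)),
      ih fun x hx => hf x (Finset.mem_insert_of_mem hx)]

/-- substitution `X a ↦ c X b`, fixing the other variables -/
noncomputable def subst (a b : Fin N) (c : ℂ) :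
    MvPolynomial (Fin N) ℂ →ₐ[ℂ] MvPolynomial (Fin N) ℂ :=
  bind₁ (fun k => if k = a then C c * X b else X k)

lemma dvd_sub_subst (a b : Fin N) (c : ℂ) (P : MvPolynomial (Fin N) ℂ) :
    (X a - C c * X b) ∣ P - subst a b c P := by
  classical
  induction P using MvPolynomial.induction_on with
  | C r => simp [subst]
  | add p q hp hq =>
    have : p + q - subst a b c (p + q) = (p - subst a b c p) + (q - subst a b c q) := by
      rw [map_add]; ring
    rw [this]; exact dvd_add hp hq
  | mul_X p j hp =>
    have hXj : (X a - C c * X b) ∣ (X j - subst a b c (X j)) := by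
      rw [subst, bind₁_X_right]
      by_cases h : j = a
      · subst h; simp
      · simp [h]
    have : p * X j - subst a b c (p * X j) =
        (p - subst a b c p) * X j + subst a b c p * (X j - subst a b c (X j)) := by
      rw [map_mul]; ring
    rw [this]
    exact dvd_add (hp.mul_right _) (Dvd.dvd.mul_left hXj _)

lemma subst_L (a b : Fin N) (hba : b ≠ a) (c : ℂ) :
    subst a b c (X a - C c * X b) = 0 := by
  simp [subst, bind₁_X_right, hba]

lemma eval_subst (a b : Fin N) (c : ℂ) (P : MvPolynomial (Fin N) ℂ) (v : Fin N → ℂ) :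
    eval v (subst a b c P) = eval (fun k => if k = a then c * v b else v k) P := by
  have hae : ∀ (w : Fin N → ℂ) (p : MvPolynomial (Fin N) ℂ), aeval w p = eval w p := by
    intro w p
    rw [← coe_aeval_eq_eval]
    rfl
  rw [← hae, subst, aeval_bind₁]
  have hfn : (fun i => (aeval v) (if i = a then C c * X b else X i)) =
      fun k => if k = a then c * v b else v k := by
    funext k
    by_cases h : k = a <;> simp [h, hae]
  rw [hfn, hae]

lemma L_dvd_of_vanish (a b : Fin N) (c : ℂ) (hba : b ≠ a) {K : MvPolynomial (Fin N) ℂ}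
    (h : ∀ v : Fin N → ℂ, v a = c * v b → eval v K = 0) : (X a - C c * X b) ∣ K := by
  have h0 : subst a b c K = 0 := by
    apply MvPolynomial.funext (q := 0)
    intro v
    rw [eval_subst, map_zero]
    apply h
    simp [hba]
  have := dvd_sub_subst a b c K
  rwa [h0, sub_zero] at this

lemma L_ne_zero (a b : Fin N) (hab : a ≠ b) (c : ℂ) :
    (X a - C c * X b : MvPolynomial (Fin N) ℂ) ≠ 0 := by
  intro h0
  have := congrArg (eval (fun k => if k = a then (1 : ℂ) else 0)) h0
  simp [Ne.symm hab] at this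

lemma L_prime (a b : Fin N) (hab : a ≠ b) (c : ℂ) :
    Prime (X a - C c * X b : MvPolynomial (Fin N) ℂ) := by
  refine ⟨L_ne_zero a b hab c, ?_, ?_⟩
  · intro hu
    obtain ⟨M, hM⟩ := isUnit_iff_exists_inv.mp hu
    have := congrArg (eval (fun k => if k = a then c else 1)) hM
    simp [Ne.symm hab] at this
  · intro p q hpq
    obtain ⟨s, hs⟩ := hpq
    have hz : subst a b c p * subst a b c q = 0 := by
      rw [← map_mul, hs, map_mul, subst_L a b hab.symm c, zero_mul]
    rcases mul_eq_zero.mp hz with h | h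
    · left
      have := dvd_sub_subst a b c p
      rwa [h, sub_zero] at this
    · right
      have := dvd_sub_subst a b c q
      rwa [h, sub_zero] at this

lemma L_not_dvd {a b a' b' : Fin N} {c c' : ℂ} (hab : a ≠ b) (ha'b' : a' ≠ b') (hc : c ≠ 0)
    (h1 : ¬(a = a' ∧ b = b' ∧ c = c')) (h2 : ¬(a = b' ∧ b = a' ∧ c * c' = 1)) :
    ¬ (X a - C c * X b) ∣ (X a' - C c' * X b' : MvPolynomial (Fin N) ℂ) := by
  intro hdvd
  obtain ⟨s, hs⟩ := hdvd
  have H : ∀ w : Fin N → ℂ,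
      (if a' = a then c * w b else w a') = c' * (if b' = a then c * w b else w b') := by
    intro w
    set v : Fin N → ℂ := fun k => if k = a then c * w b else w k with hv
    have hvL : eval v (X a - C c * X b) = 0 := by
      have hva : v a = c * w b := by simp [hv]
      have hvb : v b = w b := by simp [hv, Ne.symm hab]
      simp only [map_sub, map_mul, eval_X, eval_C, hva, hvb]
      ring
    have := congrArg (eval v) hs
    rw [map_mul, hvL, zero_mul, map_sub, map_mul, eval_X, eval_X, eval_C] at this
    have := sub_eq_zero.mp this
    simpa [hv] using this
  by_cases haa : a' = a
  · by_cases hbb : b' = a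
    · exact ha'b' (haa.trans hbb.symm)
    · by_cases hbb' : b' = b
      · have := H (fun _ => 1)
        rw [if_pos haa, if_neg hbb, mul_one, mul_one] at this
        exact h1 ⟨haa.symm, hbb'.symm, this⟩
      · have := H (fun k => if k = b then 1 else 0)
        rw [if_pos haa, if_neg hbb, if_pos rfl, if_neg hbb', mul_one, mul_zero] at this
        exact hc this
  · by_cases hba : b' = a
    · by_cases hab' : a' = b
      · have := H (fun _ => 1)
        rw [if_neg haa, if_pos hba, mul_one] at this
        exact h2 ⟨hba.symm, hab'.symm, by linear_combination -this⟩
      · have := H (fun k => if k = a' then 1 else 0)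
        rw [if_neg haa, if_pos hba, if_pos rfl, if_neg (fun h : b = a' => hab' h.symm),
          mul_zero, mul_zero] at this
        exact one_ne_zero this
    · have := H (fun k => if k = a' then 1 else 0)
      rw [if_neg haa, if_neg hba, if_pos rfl, if_neg (fun h : b' = a' => ha'b' h.symm),
        mul_zero] at this
      exact one_ne_zero this

lemma prod_primes_dvd' {α : Type*} {R : Type*} [CommRing R] [IsDomain R]
    (s : Finset α) (f : α → R) (hp : ∀ x ∈ s, Prime (f x))
    (hnd : ∀ x ∈ s, ∀ y ∈ s, x ≠ y → ¬ f x ∣ f y) :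
    ∀ M : R, (∀ x ∈ s, f x ∣ M) → (∏ x ∈ s, f x) ∣ M := by
  classical
  induction s using Finset.induction_on with
  | empty => simp
  | insert _ _ ha ih =>
    rename_i a s
    intro M hM
    obtain ⟨M', hM'⟩ := hM a (Finset.mem_insert_self a s)
    have hdvd' : ∀ x ∈ s, f x ∣ M' := by
      intro x hx
      have hx' : x ∈ insert a s := Finset.mem_insert_of_mem hx
      have hdx : f x ∣ f a * M' := hM' ▸ hM x hx'
      rcases (hp x hx').2.2 _ _ hdx with h | h
      · exact absurd h (hnd x hx' a (Finset.mem_insert_self a s)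
          (by rintro rfl; exact ha hx))
      · exact h
    rw [Finset.prod_insert ha, hM']
    exact mul_dvd_mul_left (f a)
      (ih (fun x hx => hp x (Finset.mem_insert_of_mem hx))
        (fun x hx y hy => hnd x (Finset.mem_insert_of_mem hx) y (Finset.mem_insert_of_mem hy))
        M' hdvd')

lemma one_le_pd_L (a b : Fin N) (hab : a ≠ b) (c : ℂ) (hc : c ≠ 0)
    (h : a.val < 2 ∨ b.val < 2) :
    1 ≤ partialDeg 2 (X a - C c * X b : MvPolynomial (Fin N) ℂ) := by
  classical
  have key : ∀ m : Fin N →₀ ℕ, m ∈ (X a - C c * X b : MvPolynomial (Fin N) ℂ).support →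
      wgt m = 1 → 1 ≤ partialDeg 2 (X a - C c * X b : MvPolynomial (Fin N) ℂ) := by
    intro m hm hw
    rw [partialDeg_eq, ← hw]
    exact Finset.le_sup hm
  rcases h with h | h
  · refine key (Finsupp.single a 1) ?_ (by rw [wgt_single, if_pos h])
    rw [mem_support_iff, coeff_sub, coeff_X', if_pos rfl, coeff_C_mul, coeff_X',
      if_neg (fun he : Finsupp.single b 1 = Finsupp.single a 1 => by
        have := Finsupp.single_left_injective (one_ne_zero) he
        exact hab this.symm)]
    simp
  · refine key (Finsupp.single b 1) ?_ (by rw [wgt_single, if_pos h])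
    rw [mem_support_iff, coeff_sub, coeff_X',
      if_neg (fun he : Finsupp.single a 1 = Finsupp.single b 1 => by
        have := Finsupp.single_left_injective (one_ne_zero) he
        exact hab this), coeff_C_mul, coeff_X', if_pos rfl]
    simpa using hc

end KernelAux

open KernelAux

/-- a symmetric kernel of both the kinematic equation and a two-particle
fusion condition with `deg₂ ≤ 4N − 6` vanishes. -/
theorem kernel_with_low_deg2_is_zero (N : ℕ) (hN : 2 ≤ N) (φ : ℂ)
    (hφ0 : φ ≠ 0) (hφ4 : φ ^ 4 ≠ 1)
    (K : MvPolynomial (Fin N) ℂ) (hsym : K.IsSymmetric)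
    (hkin : ∀ (x : ℂ) (v : Fin N → ℂ),
      eval (fun i : Fin N => if i.val = 0 then -x else if i.val = 1 then x else v i) K = 0)
    (hfus : ∀ (x : ℂ) (v : Fin N → ℂ),
      eval (fun i : Fin N =>
        if i.val = 0 then φ * x else if i.val = 1 then φ⁻¹ * x else v i) K = 0)
    (hdeg : partialDeg 2 K ≤ 4 * N - 6) :
    K = 0 := by
  classical
  by_contra hK0
  set q : ℂ := φ ^ 2 with hqdef
  have hq0 : q ≠ 0 := pow_ne_zero _ hφ0
  have hφ4' : q * q = φ ^ 4 := by rw [hqdef]; ring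
  have hqq : q * q ≠ 1 := by rw [hφ4']; exact hφ4
  have hqm1 : q ≠ -1 := by
    intro h
    apply hφ4
    rw [← hφ4', h]
    ring
  have hqne1 : (-1 : ℂ) ≠ q := fun h => hqm1 h.symm
  have hm1q : (-1 : ℂ) * q ≠ 1 := by
    intro h
    exact hqm1 (by linear_combination -h)
  have hqm1' : q * (-1 : ℂ) ≠ 1 := by
    intro h
    exact hqm1 (by linear_combination -h)
  have h0N : 0 < N := by omega
  have h1N : 1 < N := by omega
  set z : Fin N := ⟨0, h0N⟩ with hz
  set o : Fin N := ⟨1, h1N⟩ with ho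
  have hzval : z.val = 0 := rfl
  have hoval : o.val = 1 := rfl
  have hzo : z ≠ o := by
    intro h
    have := congrArg Fin.val h
    simp [hz, ho] at this
  -- vanishing on the relevant hyperplanes
  have hvan : ∀ i j : Fin N, i ≠ j → ∀ c : ℂ, (c = -1 ∨ c = q) →
      ∀ v : Fin N → ℂ, v i = c * v j → eval v K = 0 := by
    intro i j hij c hc v hv
    set π₁ : Equiv.Perm (Fin N) := Equiv.swap z i with hπ₁
    set j' : Fin N := π₁ j with hj'
    have hπ₁j' : π₁ j' = j := by rw [hj']; exact Equiv.swap_apply_self z i j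
    have hj'z : j' ≠ z := by
      intro h
      have h2 : π₁ j' = π₁ z := by rw [h]
      rw [hπ₁j', Equiv.swap_apply_left] at h2
      exact hij h2.symm
    set π : Equiv.Perm (Fin N) := π₁ * Equiv.swap o j' with hπ
    have hπz : π z = i := by
      rw [hπ, Equiv.Perm.mul_apply, Equiv.swap_apply_of_ne_of_ne hzo hj'z.symm,
        Equiv.swap_apply_left]
    have hπo : π o = j := by
      rw [hπ, Equiv.Perm.mul_apply, Equiv.swap_apply_left, hπ₁j']
    have hKr : eval v K = eval (v ∘ π) K := by
      conv_lhs => rw [← hsym π]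
      rw [eval_rename]
    rcases hc with rfl | rfl
    · have hfn : (fun k : Fin N => if k.val = 0 then -(v j) else
          if k.val = 1 then v j else (v ∘ π) k) = v ∘ π := by
        funext k
        by_cases hk0 : k.val = 0
        · have hkz : k = z := Fin.ext (by rw [hk0, hz])
          subst hkz
          rw [if_pos hk0]
          show -(v j) = v (π z)
          rw [hπz, hv]
          ring
        · by_cases hk1 : k.val = 1
          · have hko : k = o := Fin.ext (by rw [hk1, ho])
            subst hko
            rw [if_neg hk0, if_pos hk1]
            show v j = v (π o)
            rw [hπo]
          · rw [if_neg hk0, if_neg hk1]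
      rw [hKr, ← hfn]
      exact hkin (v j) (v ∘ π)
    · have hfn : (fun k : Fin N => if k.val = 0 then φ * (φ * v j) else
          if k.val = 1 then φ⁻¹ * (φ * v j) else (v ∘ π) k) = v ∘ π := by
        funext k
        by_cases hk0 : k.val = 0
        · have hkz : k = z := Fin.ext (by rw [hk0, hz])
          subst hkz
          rw [if_pos hk0]
          show φ * (φ * v j) = v (π z)
          rw [hπz, hv, hqdef]
          ring
        · by_cases hk1 : k.val = 1
          · have hko : k = o := Fin.ext (by rw [hk1, ho])
            subst hko
            rw [if_neg hk0, if_pos hk1]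
            show φ⁻¹ * (φ * v j) = v (π o)
            rw [hπo]
            field_simp
          · rw [if_neg hk0, if_neg hk1]
      rw [hKr, ← hfn]
      exact hfus (φ * v j) (v ∘ π)
  -- the family of linear forms
  set T : Finset (Fin N × Fin N) :=
    ((Finset.univ.filter fun l : Fin N => 0 < l.val).image fun l => (z, l)) ∪
    ((Finset.univ.filter fun l : Fin N => 1 < l.val).image fun l => (o, l)) with hT
  have hTmem : ∀ p ∈ T, p.1.val < 2 ∧ p.1 < p.2 := by
    intro p hp
    rw [hT, Finset.mem_union] at hp
    rcases hp with hp | hp <;> obtain ⟨l, hl, rfl⟩ := Finset.mem_image.mp hp <;>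
      simp only [Finset.mem_filter] at hl
    · exact ⟨by simp [hz], by rw [Fin.lt_def]; simpa [hz] using hl.2⟩
    · exact ⟨by simp [ho], by rw [Fin.lt_def]; simpa [ho] using hl.2⟩
  have hc1 : (Finset.univ.filter fun l : Fin N => 0 < l.val).card = N - 1 := by
    have he : (Finset.univ.filter fun l : Fin N => 0 < l.val) = Finset.univ.erase z := by
      ext l
      simp only [Finset.mem_filter, Finset.mem_erase, Finset.mem_univ, and_true, true_and]
      rw [Ne, Fin.ext_iff, hzval]
      omega
    rw [he, Finset.card_erase_of_mem (Finset.mem_univ z), Finset.card_univ, Fintype.card_fin]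
  have hc2 : (Finset.univ.filter fun l : Fin N => 1 < l.val).card = N - 2 := by
    have he : (Finset.univ.filter fun l : Fin N => 1 < l.val) =
        (Finset.univ.erase z).erase o := by
      ext l
      simp only [Finset.mem_filter, Finset.mem_erase, Finset.mem_univ, and_true, true_and]
      rw [Ne, Ne, Fin.ext_iff, Fin.ext_iff, hzval, hoval]
      omega
    rw [he, Finset.card_erase_of_mem
        (Finset.mem_erase.mpr ⟨hzo.symm, Finset.mem_univ o⟩),
      Finset.card_erase_of_mem (Finset.mem_univ z), Finset.card_univ, Fintype.card_fin]
    omega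
  have hTcard : T.card = (N - 1) + (N - 2) := by
    rw [hT, Finset.card_union_of_disjoint, Finset.card_image_of_injective _
        (fun l1 l2 h => (Prod.mk.injEq _ _ _ _ ▸ congrArg id h : _ ∧ _).2),
      Finset.card_image_of_injective _
        (fun l1 l2 h => (Prod.mk.injEq _ _ _ _ ▸ congrArg id h : _ ∧ _).2), hc1, hc2]
    · rw [Finset.disjoint_left]
      rintro p hp1 hp2
      obtain ⟨l1, _, rfl⟩ := Finset.mem_image.mp hp1
      obtain ⟨l2, _, he⟩ := Finset.mem_image.mp hp2
      exact hzo (congrArg Prod.fst he).symm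
  -- the linear forms
  set F : (Fin N × Fin N) × Fin 3 → MvPolynomial (Fin N) ℂ := fun x =>
    if x.2 = 0 then X x.1.1 - C (-1) * X x.1.2
    else if x.2 = 1 then X x.1.1 - C q * X x.1.2
    else X x.1.2 - C q * X x.1.1 with hF
  have hF0 : ∀ p : Fin N × Fin N, F (p, 0) = X p.1 - C (-1) * X p.2 := by
    intro p; simp [hF]
  have hF1 : ∀ p : Fin N × Fin N, F (p, 1) = X p.1 - C q * X p.2 := by
    intro p; simp [hF]
  have hF2 : ∀ p : Fin N × Fin N, F (p, 2) = X p.2 - C q * X p.1 := by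
    intro p; simp [hF]
  have fin3 : ∀ t : Fin 3, t = 0 ∨ t = 1 ∨ t = 2 := by decide
  set s : Finset ((Fin N × Fin N) × Fin 3) := T ×ˢ (Finset.univ : Finset (Fin 3)) with hs
  have hmem : ∀ x ∈ s, x.1.1.val < 2 ∧ x.1.1 < x.1.2 :=
    fun x hx => hTmem x.1 (Finset.mem_product.mp hx).1
  have hdvdK : ∀ x ∈ s, F x ∣ K := by
    rintro ⟨⟨p1, p2⟩, t⟩ hx
    obtain ⟨h2, hlt⟩ := hmem _ hx
    have hne : p1 ≠ p2 := ne_of_lt hlt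
    rcases fin3 t with rfl | rfl | rfl
    · rw [hF0]
      exact L_dvd_of_vanish p1 p2 (-1) hne.symm
        (fun v hv => hvan p1 p2 hne (-1) (Or.inl rfl) v hv)
    · rw [hF1]
      exact L_dvd_of_vanish p1 p2 q hne.symm
        (fun v hv => hvan p1 p2 hne q (Or.inr rfl) v hv)
    · rw [hF2]
      exact L_dvd_of_vanish p2 p1 q hne
        (fun v hv => hvan p2 p1 hne.symm q (Or.inr rfl) v hv)
  have hprime : ∀ x ∈ s, Prime (F x) := by
    rintro ⟨⟨p1, p2⟩, t⟩ hx
    obtain ⟨h2, hlt⟩ := hmem _ hx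
    have hne : p1 ≠ p2 := ne_of_lt hlt
    rcases fin3 t with rfl | rfl | rfl
    · rw [hF0]; exact L_prime p1 p2 hne (-1)
    · rw [hF1]; exact L_prime p1 p2 hne q
    · rw [hF2]; exact L_prime p2 p1 hne.symm q
  have hnd : ∀ x ∈ s, ∀ y ∈ s, x ≠ y → ¬ F x ∣ F y := by
    rintro ⟨⟨p1, p2⟩, t⟩ hx ⟨⟨r1, r2⟩, u⟩ hy hxy
    obtain ⟨hx2, hxlt⟩ := hmem _ hx
    obtain ⟨hy2, hylt⟩ := hmem _ hy
    rw [Fin.lt_def] at hxlt hylt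
    have hxlt' : (p1 : ℕ) < (p2 : ℕ) := hxlt
    have hylt' : (r1 : ℕ) < (r2 : ℕ) := hylt
    have hnex : p1 ≠ p2 := Fin.ne_of_val_ne (Nat.ne_of_lt hxlt')
    have hney : r1 ≠ r2 := Fin.ne_of_val_ne (Nat.ne_of_lt hylt')
    have hm1ne0 : (-1 : ℂ) ≠ 0 := by norm_num
    rcases fin3 t with rfl | rfl | rfl <;> rcases fin3 u with rfl | rfl | rfl <;>
      simp only [hF0, hF1, hF2] <;>
      [apply L_not_dvd hnex hney hm1ne0;
       apply L_not_dvd hnex hney hm1ne0;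
       apply L_not_dvd hnex hney.symm hm1ne0;
       apply L_not_dvd hnex hney hq0;
       apply L_not_dvd hnex hney hq0;
       apply L_not_dvd hnex hney.symm hq0;
       apply L_not_dvd hnex.symm hney hq0;
       apply L_not_dvd hnex.symm hney hq0;
       apply L_not_dvd hnex.symm hney.symm hq0] <;>
      rintro ⟨e1, e2, e3⟩ <;>
      first
        | exact absurd e3 hqne1
        | exact absurd e3 hqm1
        | exact absurd e3 hqq
        | exact absurd e3 hm1q
        | exact absurd e3 hqm1'
        | exact hxy (Prod.ext (Prod.ext e1 e2) rfl)
        | exact hxy (Prod.ext (Prod.ext e2 e1) rfl)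
        | (have v1 := congrArg Fin.val e1; have v2 := congrArg Fin.val e2; omega)
  have hGdvd := prod_primes_dvd' s F hprime hnd K hdvdK
  obtain ⟨S, hS⟩ := hGdvd
  have hFne : ∀ x ∈ s, F x ≠ 0 := fun x hx => (hprime x hx).ne_zero
  have hGne : (∏ x ∈ s, F x) ≠ 0 := Finset.prod_ne_zero_iff.mpr hFne
  have hSne : S ≠ 0 := fun h => hK0 (by rw [hS, h, mul_zero])
  have hdK : partialDeg 2 K = partialDeg 2 (∏ x ∈ s, F x) + partialDeg 2 S := by
    rw [hS]; exact pd_mul hGne hSne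
  have hdG : partialDeg 2 (∏ x ∈ s, F x) = ∑ x ∈ s, partialDeg 2 (F x) := pd_prod s F hFne
  have hlow : ∀ x ∈ s, 1 ≤ partialDeg 2 (F x) := by
    rintro ⟨⟨p1, p2⟩, t⟩ hx
    obtain ⟨h2, hlt⟩ := hmem _ hx
    have hne : p1 ≠ p2 := ne_of_lt hlt
    rcases fin3 t with rfl | rfl | rfl
    · rw [hF0]; exact one_le_pd_L p1 p2 hne (-1) (by norm_num) (Or.inl h2)
    · rw [hF1]; exact one_le_pd_L p1 p2 hne q hq0 (Or.inl h2)
    · rw [hF2]; exact one_le_pd_L p2 p1 hne.symm q hq0 (Or.inr h2)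
  have hsum : s.card ≤ ∑ x ∈ s, partialDeg 2 (F x) := by
    calc s.card = ∑ _x ∈ s, 1 := by simp
    _ ≤ _ := Finset.sum_le_sum hlow
  have hscard : s.card = T.card * 3 := by
    rw [hs, Finset.card_product]
    simp
  omega
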